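/- (O(n)-invariance of the DC component.) For every R ∈ O(n) and every input X ∈ ℝ^{n+2}, the sum of the components of the output of the equivariant hypersphere is O(n)-invariant: 𝟙_{n+1}ᵀ · (B · (D₂(R) · X)) = 𝟙_{n+1}ᵀ · (B · X), where 𝟙_{n+1} ∈ ℝ^{n+1} is the all-ones vector. -/

import Mathlib

/-- κ = −(1+√(n+1))/n^{3/2} -/
noncomputable def simplexKappa (n : ℕ) : ℝ :=
  -(1 + Real.sqrt (n + 1)) / (n : ℝ) ^ ((3 : ℝ) / 2)

/-- μ = √(1 + 1/n) -/
noncomputable def simplexMu (n : ℕ) : ℝ := Real.sqrt (1 + 1 / n)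

/-- The vertices p_1, …, p_{n+1} ∈ ℝ^n of the regular n-simplex (0-indexed by `Fin (n+1)`):
`p_1 = n^{-1/2}·𝟙` and `p_i = κ·𝟙 + μ·e_{i-1}` for `2 ≤ i ≤ n+1`. -/
noncomputable def simplexVertex (n : ℕ) (i : Fin (n + 1)) : EuclideanSpace ℝ (Fin n) :=
  WithLp.toLp 2 fun j =>
    if (i : ℕ) = 0 then (n : ℝ) ^ (-(1 : ℝ) / 2)
    else simplexKappa n + (if (j : ℕ) = (i : ℕ) - 1 then simplexMu n else 0)

open Matrix

/-- The (n+1)×(n+1) change-of-basis matrix M_n whose i-th column is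
m_i = (1/p)·(p_i, n^{-1/2}) with p = √(1 + 1/n). -/
noncomputable def simplexM (n : ℕ) : Matrix (Fin (n + 1)) (Fin (n + 1)) ℝ :=
  Matrix.of fun j i =>
    (Real.sqrt (1 + 1 / n))⁻¹ *
      (if h : (j : ℕ) < n then simplexVertex n i ⟨j, h⟩ else (n : ℝ) ^ (-(1 : ℝ) / 2))
/-- D(A): the (n+1)×(n+1) block-diagonal matrix diag(A, 1), appending a 1 to the
diagonal of the n×n matrix A. -/
def blockDiag1 (n : ℕ) (A : Matrix (Fin n) (Fin n) ℝ) :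
    Matrix (Fin (n + 1)) (Fin (n + 1)) ℝ :=
  Matrix.of fun i j =>
    if hi : (i : ℕ) < n then (if hj : (j : ℕ) < n then A ⟨i, hi⟩ ⟨j, hj⟩ else 0)
    else (if (i : ℕ) = (j : ℕ) then 1 else 0)
/-- D₂(A): the (n+2)×(n+2) block-diagonal matrix diag(A, 1, 1), appending two 1s to
the diagonal of the n×n matrix A. -/
def blockDiag2 (n : ℕ) (A : Matrix (Fin n) (Fin n) ℝ) :
    Matrix (Fin (n + 2)) (Fin (n + 2)) ℝ :=
  Matrix.of fun i j =>
    if hi : (i : ℕ) < n then (if hj : (j : ℕ) < n then A ⟨i, hi⟩ ⟨j, hj⟩ else 0)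
    else (if (i : ℕ) = (j : ℕ) then 1 else 0)

/-- The filter-bank matrix B of the equivariant hypersphere: the (n+1)×(n+2) matrix
whose i-th row is ((R_Oᵀ · T_i · R_O)·c₀, s₁, s₂) ∈ ℝ^{n+2}. -/
noncomputable def filterBank (n : ℕ) (c₀ : EuclideanSpace ℝ (Fin n)) (s₁ s₂ : ℝ)
    (RO : Matrix (Fin n) (Fin n) ℝ) (T : Fin (n + 1) → Matrix (Fin n) (Fin n) ℝ) :
    Matrix (Fin (n + 1)) (Fin (n + 2)) ℝ :=
  Matrix.of fun i j =>
    if h : (j : ℕ) < n then ((ROᵀ * T i * RO).mulVec c₀) ⟨j, h⟩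
    else if (j : ℕ) = n then s₁ else s₂

lemma sum_simplexVertex (n : ℕ) (hn : 1 ≤ n) (j : Fin n) :
    ∑ i : Fin (n + 1), simplexVertex n i j = 0 := by
  have hn0 : (0:ℝ) < n := by exact_mod_cast hn
  rw [Fin.sum_univ_succ]
  have h0 : simplexVertex n 0 j = (n : ℝ) ^ (-(1 : ℝ) / 2) := by
    simp [simplexVertex]
  have hs : ∀ i : Fin n, simplexVertex n (i.succ) j
      = simplexKappa n + (if j = i then simplexMu n else 0) := by
    intro i
    simp [simplexVertex, Fin.val_succ, Fin.ext_iff]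
  rw [h0]
  simp only [hs]
  rw [Finset.sum_add_distrib, Finset.sum_const, Finset.sum_ite_eq]
  simp only [Finset.mem_univ, if_true, Finset.card_univ, Fintype.card_fin, nsmul_eq_mul]
  set a := Real.sqrt n with ha
  set b := Real.sqrt (n + 1) with hb
  have ha0 : 0 < a := Real.sqrt_pos.mpr hn0
  have ha2 : a ^ 2 = n := Real.sq_sqrt hn0.le
  have h1 : (n : ℝ) ^ (-(1 : ℝ) / 2) = a⁻¹ := by
    rw [neg_div, Real.rpow_neg hn0.le, ha, Real.sqrt_eq_rpow]
  have h2 : (n : ℝ) ^ ((3 : ℝ) / 2) = n * a := by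
    have : (3:ℝ)/2 = 1 + 1/2 := by norm_num
    rw [this, Real.rpow_add hn0, Real.rpow_one, ha, Real.sqrt_eq_rpow]
  have h3 : simplexMu n = b / a := by
    rw [simplexMu, ha, hb]
    rw [show (1 + 1 / (n:ℝ)) = ((n:ℝ)+1)/n by field_simp]
    exact Real.sqrt_div (by positivity) n
  rw [h1, simplexKappa, h2, h3]
  field_simp
  ring

/-- (O(n)-invariance of the DC component.) For every R ∈ O(n) and every input
X ∈ ℝ^{n+2}, the sum of the components of the output of the equivariant hypersphere
is O(n)-invariant: 𝟙ᵀ · (B · (D₂(R) · X)) = 𝟙ᵀ · (B · X). -/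
theorem invariant_dc_component (n : ℕ) (hn : 1 ≤ n)
    (c₀ : EuclideanSpace ℝ (Fin n)) (s₁ s₂ : ℝ)
    (RO : Matrix (Fin n) (Fin n) ℝ) (hRO : ROᵀ * RO = 1)
    (T : Fin (n + 1) → Matrix (Fin n) (Fin n) ℝ) (hT : ∀ i, (T i)ᵀ * T i = 1)
    (hTc : ∀ i, (T i).mulVec (RO.mulVec c₀) = ‖c₀‖ • simplexVertex n i)
    (R : Matrix (Fin n) (Fin n) ℝ) (hR : Rᵀ * R = 1)
    (X : Fin (n + 2) → ℝ) :
    ∑ i : Fin (n + 1),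
        (filterBank n c₀ s₁ s₂ RO T).mulVec ((blockDiag2 n R).mulVec X) i =
      ∑ i : Fin (n + 1), (filterBank n c₀ s₁ s₂ RO T).mulVec X i := by
  classical
  have hcol : ∀ j : Fin (n+2), (hj : (j:ℕ) < n) →
      ∑ i : Fin (n+1), filterBank n c₀ s₁ s₂ RO T i j = 0 := by
    intro j hj
    have hrow : ∀ i : Fin (n+1), filterBank n c₀ s₁ s₂ RO T i j
        = ∑ l : Fin n, ROᵀ ⟨(j:ℕ), hj⟩ l * (‖c₀‖ * simplexVertex n i l) := by
      intro i
      show (if h : (j : ℕ) < n then ((ROᵀ * T i * RO).mulVec c₀) ⟨(j:ℕ), h⟩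
        else if (j : ℕ) = n then s₁ else s₂) = _
      rw [dif_pos hj]
      rw [Matrix.mul_assoc, ← Matrix.mulVec_mulVec, ← Matrix.mulVec_mulVec, hTc i]
      simp [Matrix.mulVec, dotProduct, PiLp.smul_apply, smul_eq_mul]
    calc ∑ i : Fin (n+1), filterBank n c₀ s₁ s₂ RO T i j
        = ∑ l : Fin n, ROᵀ ⟨(j:ℕ), hj⟩ l *
            (‖c₀‖ * ∑ i : Fin (n+1), simplexVertex n i l) := by
          simp only [hrow]
          rw [Finset.sum_comm]
          simp [Finset.mul_sum]
      _ = 0 := by simp [sum_simplexVertex n hn]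
  have hY : ∀ j : Fin (n+2), ¬ (j:ℕ) < n → (blockDiag2 n R).mulVec X j = X j := by
    intro j hj
    show ∑ k, (blockDiag2 n R) j k * X k = X j
    have : ∀ k : Fin (n+2), (blockDiag2 n R) j k = if j = k then 1 else 0 := by
      intro k
      simp [blockDiag2, hj, Fin.ext_iff]
    simp [this, ite_mul]
  have expand : ∀ (v : Fin (n+2) → ℝ),
      ∑ i : Fin (n+1), (filterBank n c₀ s₁ s₂ RO T).mulVec v i
        = ∑ j : Fin (n+2), (∑ i : Fin (n+1), filterBank n c₀ s₁ s₂ RO T i j) * v j := by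
    intro v
    simp only [Matrix.mulVec, dotProduct, Finset.sum_mul]
    exact Finset.sum_comm
  rw [expand, expand]
  apply Finset.sum_congr rfl
  intro j _
  by_cases hj : (j:ℕ) < n
  · rw [hcol j hj]; ring
  · rw [hY j hj]
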